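/- Let L be a symmetric positive semidefinite matrix of rank r, let C ⊆ {1,...,K} index a set of r linearly independent columns of L, let C be the K×r matrix of those columns and W = L_{C,C} the corresponding r×r principal submatrix. Then W is invertible and the Nyström extension C W^{-1} C^T equals L exactly. -/

import Mathlib

open Matrix

/-- If L is SPSD of rank r and C indexes r linearly independent columns of L,
then W = L_{C,C} is invertible and the Nyström extension C W⁻¹ Cᵀ equals L exactly. -/
theorem stmt_2 (K r : ℕ) (L : Matrix (Fin K) (Fin K) ℝ) (hL : L.PosSemidef)
    (hrank : L.rank = r) (C : Finset (Fin K)) (hcard : C.card = r)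
    (hind : LinearIndependent ℝ (fun c : C => Lᵀ (c : Fin K))) :
    IsUnit (L.submatrix (Subtype.val : C → Fin K) Subtype.val).det ∧
      L.submatrix id (Subtype.val : C → Fin K) *
          (L.submatrix (Subtype.val : C → Fin K) Subtype.val)⁻¹ *
          (L.submatrix id (Subtype.val : C → Fin K))ᵀ = L := by
  classical
  set B := (open scoped MatrixOrder in CFC.sqrt L) with hBdef
  have hBB : B * B = L := by
    open scoped MatrixOrder in exact CFC.sqrt_mul_sqrt_self L hL.nonneg
  have hBsym : Bᵀ = B := by
    have : B.IsHermitian := by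
      open scoped MatrixOrder in exact (CFC.sqrt_nonneg L).posSemidef.isHermitian
    rwa [IsHermitian, conjTranspose_eq_transpose_of_trivial] at this
  -- Bc : columns of B indexed by C
  set Bc : Matrix (Fin K) C ℝ := B.submatrix id Subtype.val with hBcdef
  -- columns of B indexed by C are linearly independent
  have hcolL : (fun c : C => Lᵀ (c : Fin K)) =
      B.mulVecLin ∘ (fun c : C => fun i => B i (c : Fin K)) := by
    funext c
    simp only [Function.comp_apply, mulVecLin_apply]
    funext j
    rw [← hBB]
    simp [mulVec, dotProduct, mul_apply, transpose_apply]
  have hindB : LinearIndependent ℝ (fun c : C => fun i => B i (c : Fin K)) := by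
    rw [hcolL] at hind
    exact LinearIndependent.of_comp _ hind
  -- mulVecLin of Bc is injective
  have hBcmul : ∀ v : C → ℝ, Bc *ᵥ v = ∑ c : C, v c • (fun i => B i (c : Fin K)) := by
    intro v
    funext i
    simp [mulVec, dotProduct, Finset.sum_apply, mul_comm, hBcdef]
  have hinj : Function.Injective Bc.mulVecLin := by
    rw [← LinearMap.ker_eq_bot, LinearMap.ker_eq_bot']
    intro v hv
    rw [mulVecLin_apply, hBcmul] at hv
    have := Fintype.linearIndependent_iff.mp hindB v hv
    funext c; exact this c
  have hBe : ∀ i j, B j i = B i j := fun i j => congrFun (congrFun hBsym i) j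
  -- W is positive definite
  have hW : L.submatrix (Subtype.val : C → Fin K) Subtype.val = Bcᵀ * Bc := by
    ext c d
    rw [← hBB]
    simp only [submatrix_apply, mul_apply, transpose_apply, hBcdef, submatrix_apply, id_eq]
    exact Finset.sum_congr rfl fun k _ => by rw [hBe]
  have hWpd : (L.submatrix (Subtype.val : C → Fin K) Subtype.val).PosDef := by
    rw [hW]
    refine PosDef.of_dotProduct_mulVec_pos (by
      have := isHermitian_conjTranspose_mul_self Bc
      rwa [conjTranspose_eq_transpose_of_trivial] at this) fun x hx => ?_
    · have h1 : (star x) ⬝ᵥ ((Bcᵀ * Bc) *ᵥ x) = (Bc *ᵥ x) ⬝ᵥ (Bc *ᵥ x) := by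
        rw [← mulVec_mulVec, dotProduct_mulVec, vecMul_transpose]
        simp [star, dotProduct, mul_comm]
      rw [h1]
      have hnn : 0 ≤ (Bc *ᵥ x) ⬝ᵥ (Bc *ᵥ x) :=
        Finset.sum_nonneg fun i _ => mul_self_nonneg _
      rcases lt_or_eq_of_le hnn with h | h
      · exact h
      · exfalso
        have : Bc *ᵥ x = 0 := dotProduct_self_eq_zero.mp h.symm
        exact hx (hinj (by simpa using this))
  have hdet : IsUnit (L.submatrix (Subtype.val : C → Fin K) Subtype.val).det :=
    isUnit_iff_ne_zero.mpr (ne_of_gt hWpd.det_pos)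
  refine ⟨hdet, ?_⟩
  -- ranges coincide
  have hle : LinearMap.range Bc.mulVecLin ≤ LinearMap.range B.mulVecLin := by
    rintro y ⟨v, rfl⟩
    refine ⟨fun j => if hj : j ∈ C then v ⟨j, hj⟩ else 0, ?_⟩
    simp only [mulVecLin_apply]
    funext i
    simp only [mulVec, dotProduct]
    rw [show (∑ j : Fin K, B i j * if hj : j ∈ C then v ⟨j, hj⟩ else 0)
        = ∑ j ∈ C, B i j * (if hj : j ∈ C then v ⟨j, hj⟩ else 0) from
      (Finset.sum_subset C.subset_univ (by intro j _ hj; simp [hj])).symm]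
    rw [← Finset.sum_attach C (fun j => B i j * if hj : j ∈ C then v ⟨j, hj⟩ else 0)]
    refine Finset.sum_congr rfl fun c _ => ?_
    simp [c.2, hBcdef]
  have hrB : B.rank = r := by
    have := rank_transpose_mul_self B
    rw [hBsym, hBB, hrank] at this
    exact this.symm
  have hfr1 : Module.finrank ℝ (LinearMap.range Bc.mulVecLin) = r := by
    rw [LinearMap.finrank_range_of_inj hinj]
    simp [Module.finrank_pi, hcard]
  have hfr2 : Module.finrank ℝ (LinearMap.range B.mulVecLin) = r := hrB
  have hrange : LinearMap.range Bc.mulVecLin = LinearMap.range B.mulVecLin :=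
    Submodule.eq_of_le_of_finrank_le hle (by rw [hfr1, hfr2])
  -- express B as Bc * M
  have hcolmem : ∀ j : Fin K, ∃ v : C → ℝ, Bc *ᵥ v = fun i => B i j := by
    intro j
    have : (fun i => B i j) ∈ LinearMap.range B.mulVecLin := by
      refine ⟨Pi.single j 1, ?_⟩
      simp [mulVecLin_apply, mulVec_single]; rfl
    rw [← hrange] at this
    obtain ⟨v, hv⟩ := this
    exact ⟨v, hv⟩
  choose M hM using hcolmem
  set Mm : Matrix C (Fin K) ℝ := fun c j => M j c with hMm
  have hBM : B = Bc * Mm := by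
    ext i j
    have := congrFun (hM j) i
    simp only [mulVec, dotProduct] at this
    rw [mul_apply, ← this]
  -- the C-columns matrix
  have hCmat : L.submatrix id (Subtype.val : C → Fin K) = Mmᵀ *
      (L.submatrix (Subtype.val : C → Fin K) Subtype.val) := by
    have h1 : L.submatrix id (Subtype.val : C → Fin K) = Bᵀ * Bc := by
      ext i c
      rw [← hBB]
      simp only [submatrix_apply, id_eq, mul_apply, transpose_apply, hBcdef, submatrix_apply]
      exact Finset.sum_congr rfl fun k _ => by rw [hBe k i]
    rw [h1, hW, hBM, transpose_mul, Matrix.mul_assoc]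
  have hWsym : (L.submatrix (Subtype.val : C → Fin K) Subtype.val)ᵀ =
      L.submatrix (Subtype.val : C → Fin K) Subtype.val := by
    rw [hW, transpose_mul, transpose_transpose]
  set W := L.submatrix (Subtype.val : C → Fin K) Subtype.val with hWdef
  rw [hCmat]
  calc Mmᵀ * W * W⁻¹ * (Mmᵀ * W)ᵀ
      = Mmᵀ * W * W⁻¹ * (W * Mm) := by rw [transpose_mul, transpose_transpose, hWsym]
    _ = Mmᵀ * (W * W⁻¹ * W) * Mm := by
        simp only [Matrix.mul_assoc]
    _ = Mmᵀ * W * Mm := by rw [mul_nonsing_inv _ hdet, one_mul]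
    _ = (Bc * Mm)ᵀ * (Bc * Mm) := by rw [hW, transpose_mul]; simp only [Matrix.mul_assoc]
    _ = L := by rw [← hBM, hBsym, hBB]
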